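/- arXiv:0704.2920 — 2 statements merged into one kernel-verified Lean document; each statement's English description precedes it below -/
import Mathlib

section
/- Let s, l, k be positive integers and let w be a permutation of {1, 2, ..., k} such that s divides l + w(i) - i for every i in {1, ..., k}. Then s divides k or s divides l. -/
lemma count_formula (s : ℕ) (hs : 1 < s) (x : ℕ) (hx : x < s) (k : ℕ) :
    ((Finset.range k).filter (fun i => i % s = x)).card
      = k / s + if x < k % s then 1 else 0 := by
  induction k with
  | zero => simp
  | succ n ih =>
    rw [Finset.range_add_one, Finset.filter_insert]
    have hmod : (n % s + 1) % s = (n + 1) % s := Nat.mod_add_mod n s 1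
    have hdiv : (n + 1) / s = n / s + if s ∣ (n + 1) then 1 else 0 := (Nat.succ_div (a := n) (b := s))
    have h1 : n % s < s := Nat.mod_lt _ (by omega)
    have h2 : (n + 1) % s < s := Nat.mod_lt _ (by omega)
    by_cases hb : n % s + 1 = s
    · have hm2 : (n + 1) % s = 0 := by rw [← hmod, hb, Nat.mod_self]
      have hd2 : s ∣ n + 1 := Nat.dvd_of_mod_eq_zero hm2
      rw [if_pos hd2] at hdiv
      by_cases hnx : n % s = x
      · rw [if_pos hnx, Finset.card_insert_of_notMem (by simp), ih]
        rw [hdiv, hm2]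
        split_ifs <;> omega
      · rw [if_neg hnx, ih, hdiv, hm2]
        split_ifs <;> omega
    · have hm2 : (n + 1) % s = n % s + 1 := by
        rw [← hmod, Nat.mod_eq_of_lt (by omega)]
      have hd2 : ¬ s ∣ n + 1 := by
        rintro ⟨c, hc⟩
        rw [hc, Nat.mul_mod_right] at hm2
        omega
      rw [if_neg hd2] at hdiv
      by_cases hnx : n % s = x
      · rw [if_pos hnx, Finset.card_insert_of_notMem (by simp), ih]
        rw [hdiv, hm2]
        split_ifs <;> omega
      · rw [if_neg hnx, ih, hdiv, hm2]
        split_ifs <;> omega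

theorem stmt_0 (s l k : ℕ) (hs : 0 < s) (hl : 0 < l) (hk : 0 < k)
    (w : Equiv.Perm (Fin k))
    (h : ∀ i : Fin k, (s : ℤ) ∣ ((l : ℤ) + ((w i : ℕ) : ℤ) - ((i : ℕ) : ℤ))) :
    s ∣ k ∨ s ∣ l := by
  by_cases hsl : s ∣ l
  · exact Or.inr hsl
  left
  have hs1 : 1 < s := by
    rcases Nat.lt_or_ge s 2 with h' | h'
    · interval_cases s
      · exact absurd (one_dvd l) hsl
    · omega
  by_contra hk'
  -- residue counting function mod s
  set M : ZMod s → ℕ :=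
    fun r => (Finset.univ.filter (fun i : Fin k => ((i : ℕ) : ZMod s) = r)).card with hM
  have hw : ∀ i : Fin k, ((w i : ℕ) : ZMod s) = ((i : ℕ) : ZMod s) - (l : ZMod s) := by
    intro i
    have h0 : (((l : ℤ) + ((w i : ℕ) : ℤ) - ((i : ℕ) : ℤ) : ℤ) : ZMod s) = 0 :=
      (ZMod.intCast_zmod_eq_zero_iff_dvd _ s).mpr (h i)
    push_cast at h0
    linear_combination h0
  have step : ∀ r : ZMod s, M r = M (r - l) := by
    intro r
    apply Finset.card_equiv w
    intro i
    simp only [hM, Finset.mem_filter, Finset.mem_univ, true_and, hw i, sub_left_inj]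
  have inv : ∀ a : ℤ, ∀ r : ZMod s, M (r + (a : ZMod s) * (l : ZMod s)) = M r := by
    intro a
    induction a using Int.induction_on with
    | zero => intro r; simp
    | succ n ihn =>
        intro r
        have h1 := step (r + ((n : ℤ) : ZMod s) * (l : ZMod s) + (l : ZMod s))
        simp only [add_sub_cancel_right] at h1
        have e : (((n : ℤ) + 1 : ℤ) : ZMod s) * (l : ZMod s)
            = ((n : ℤ) : ZMod s) * (l : ZMod s) + (l : ZMod s) := by push_cast; ring
        rw [e, ← add_assoc, h1]
        exact ihn r
    | pred n ihn =>
        intro r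
        have h1 := step (r + ((-(n : ℤ) : ℤ) : ZMod s) * (l : ZMod s))
        have e : (((-(n : ℤ) - 1 : ℤ)) : ZMod s) * (l : ZMod s)
            = ((-(n : ℤ) : ℤ) : ZMod s) * (l : ZMod s) - (l : ZMod s) := by push_cast; ring
        rw [e, ← add_sub_assoc, ← h1]
        exact ihn r
  set g := Nat.gcd s l with hgdef
  have hgpos : 0 < g := Nat.gcd_pos_of_pos_left _ hs
  have hgs : g ∣ s := Nat.gcd_dvd_left s l
  have hglt : g < s :=
    lt_of_le_of_ne (Nat.le_of_dvd hs hgs) (fun e => hsl (e ▸ Nat.gcd_dvd_right s l))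
  have hg0 : ((g : ℕ) : ZMod s) = ((Nat.gcdB s l : ℤ) : ZMod s) * (l : ZMod s) := by
    have hb := congrArg (fun z : ℤ => (z : ZMod s)) (Nat.gcd_eq_gcd_ab s l)
    push_cast at hb
    simpa [ZMod.natCast_self, mul_comm] using hb
  have per : ∀ r : ZMod s, M (r + (g : ZMod s)) = M r := by
    intro r
    rw [hg0]
    exact inv _ r
  -- link to counting over range k
  have link : ∀ x : ℕ, x < s →
      M ((x : ZMod s)) = ((Finset.range k).filter (fun i => i % s = x)).card := by
    intro x hx
    apply Finset.card_bij (fun (i : Fin k) _ => (i : ℕ))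
    · intro a ha
      simp only [hM, Finset.mem_filter, Finset.mem_univ, true_and] at ha
      simp only [Finset.mem_filter, Finset.mem_range]
      refine ⟨a.isLt, ?_⟩
      have h2 := (ZMod.natCast_eq_natCast_iff _ _ _).mp ha
      unfold Nat.ModEq at h2
      rw [Nat.mod_eq_of_lt hx] at h2
      exact h2
    · exact fun a _ b _ hab => Fin.val_injective hab
    · intro b hb
      simp only [Finset.mem_filter, Finset.mem_range] at hb
      refine ⟨⟨b, hb.1⟩, ?_, rfl⟩
      simp only [hM, Finset.mem_filter, Finset.mem_univ, true_and]
      refine (ZMod.natCast_eq_natCast_iff _ _ _).mpr ?_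
      unfold Nat.ModEq
      rw [Nat.mod_eq_of_lt hx]
      exact hb.2
  have per' : ∀ x : ℕ, x < s →
      ((Finset.range k).filter (fun i => i % s = x)).card
        = ((Finset.range k).filter (fun i => i % s = (x + g) % s)).card := by
    intro x hx
    rw [← link x hx, ← link ((x + g) % s) (Nat.mod_lt _ hs)]
    have e : (((x + g) % s : ℕ) : ZMod s) = (x : ZMod s) + (g : ZMod s) := by
      rw [ZMod.natCast_mod]; push_cast; ring
    rw [e, per]
  have hm : 0 < k % s := Nat.pos_of_ne_zero (fun e => hk' (Nat.dvd_of_mod_eq_zero e))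
  have hms : k % s < s := Nat.mod_lt _ hs
  have h2g : g + g ≤ s := by
    obtain ⟨c, hc⟩ := hgs
    have : 2 ≤ c := by
      rcases Nat.lt_or_ge c 2 with h' | h'
      · interval_cases c <;> omega
      · exact h'
    calc g + g = g * 2 := by ring
    _ ≤ g * c := Nat.mul_le_mul_left _ this
    _ = s := hc.symm
  rcases lt_or_ge (k % s) g with hc | hc
  · have h1 := per' (s - g) (by omega)
    have e : (s - g + g) % s = 0 := by
      rw [Nat.sub_add_cancel (le_of_lt hglt), Nat.mod_self]
    rw [e, count_formula s hs1 _ (by omega) k, count_formula s hs1 0 (by omega) k] at h1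
    split_ifs at h1 <;> omega
  · have h1 := per' (k % s - g) (by omega)
    have e : (k % s - g + g) % s = k % s := by
      rw [Nat.sub_add_cancel hc, Nat.mod_eq_of_lt hms]
    rw [e, count_formula s hs1 _ (by omega) k, count_formula s hs1 _ (by omega) k] at h1
    split_ifs at h1 <;> omega
end

section
/- Let l ≥ 2 be an integer and let s be an l-cycle acting on ℝ^l by permutation of coordinates. On the invariant hyperplane V = {x ∈ ℝ^l : ∑ x_i = 0}, the absolute value of det(s - 1) equals l. -/
open Fin.NatCast Fin.CommRing

section glue
variable (n : ℕ)

noncomputable def extv (y : Fin (n+1) → ℝ) : Fin (n+2) → ℝ :=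
  fun i => if h : (i:ℕ) < n+1 then y ⟨i, h⟩ else 0

lemma extv_add (y z : Fin (n+1) → ℝ) : extv n (y + z) = extv n y + extv n z := by
  funext i; unfold extv; simp only [Pi.add_apply]; split_ifs <;> simp

lemma extv_smul (c : ℝ) (y : Fin (n+1) → ℝ) : extv n (c • y) = c • extv n y := by
  funext i; unfold extv; simp only [Pi.smul_apply]; split_ifs <;> simp

noncomputable def phiL : (Fin (n+1) → ℝ) →ₗ[ℝ] (Fin (n+2) → ℝ) where
  toFun y := fun i => extv n y i - extv n y (i - 1)
  map_add' y z := by funext i; simp only [extv_add, Pi.add_apply]; ring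
  map_smul' c y := by
    funext i
    simp only [extv_smul, Pi.smul_apply, RingHom.id_apply, smul_eq_mul]
    ring

noncomputable def psiL : (Fin (n+2) → ℝ) →ₗ[ℝ] (Fin (n+1) → ℝ) where
  toFun x := fun j => ∑ k ∈ Finset.range ((j:ℕ)+1), x (k : Fin (n+2))
  map_add' x z := by funext j; simp [Finset.sum_add_distrib]
  map_smul' c x := by funext j; simp [Finset.mul_sum]

lemma phiL_apply (y : Fin (n+1) → ℝ) (i : Fin (n+2)) :
    phiL n y i = extv n y i - extv n y (i - 1) := rfl

lemma psiL_apply (x : Fin (n+2) → ℝ) (j : Fin (n+1)) :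
    psiL n x j = ∑ k ∈ Finset.range ((j:ℕ)+1), x (k : Fin (n+2)) := rfl

lemma neg_one_val : ((0 - 1 : Fin (n+2)) : ℕ) = n+1 := by
  rw [Fin.sub_def]
  simp

lemma cast_succ_sub_one (k : ℕ) : ((k+1 : ℕ) : Fin (n+2)) - 1 = (k : Fin (n+2)) := by
  push_cast
  ring

lemma extv_cast (y : Fin (n+1) → ℝ) (j : ℕ) (hj : j < n+1) :
    extv n y ((j : ℕ) : Fin (n+2)) = y ⟨j, hj⟩ := by
  unfold extv
  have hv : (((j : ℕ) : Fin (n+2)) : ℕ) = j := Fin.val_cast_of_lt (by omega)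
  rw [dif_pos (by rw [hv]; exact hj)]
  exact congrArg y (Fin.ext hv)

lemma extv_last (y : Fin (n+1) → ℝ) (i : Fin (n+2)) (hi : (i:ℕ) = n+1) :
    extv n y i = 0 := by
  unfold extv
  rw [dif_neg (by omega)]

lemma psi_phi (y : Fin (n+1) → ℝ) : psiL n (phiL n y) = y := by
  funext j
  rw [psiL_apply]
  set f : ℕ → ℝ := fun k => extv n y ((k : Fin (n+2)) - 1) with hf
  have hterm : ∀ k : ℕ, phiL n y (k : Fin (n+2)) = f (k+1) - f k := by
    intro k
    rw [phiL_apply, hf]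
    simp only
    rw [cast_succ_sub_one]
  rw [Finset.sum_congr rfl (fun k _ => hterm k), Finset.sum_range_sub f]
  have h0 : f 0 = 0 := by
    rw [hf]
    simp only [Nat.cast_zero]
    apply extv_last
    exact neg_one_val n
  have h1 : f ((j:ℕ)+1) = y j := by
    rw [hf]
    simp only
    rw [cast_succ_sub_one, extv_cast n y (j:ℕ) j.isLt]
  rw [h0, h1, sub_zero]

lemma sum_phiL (y : Fin (n+1) → ℝ) : ∑ i : Fin (n+2), phiL n y i = 0 := by
  simp only [phiL_apply, Finset.sum_sub_distrib]
  rw [sub_eq_zero]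
  exact (Fintype.sum_equiv (Equiv.subRight (1 : Fin (n+2))) _ _ (fun i => rfl)).symm

lemma phi_psi (x : Fin (n+2) → ℝ) (hx : ∑ i : Fin (n+2), x i = 0) :
    phiL n (psiL n x) = x := by
  funext i
  rw [phiL_apply]
  have hsum : ∀ m : ℕ, m < n+2 → extv n (psiL n x) ((m:ℕ) : Fin (n+2)) =
      (if m < n+1 then ∑ k ∈ Finset.range (m+1), x (k : Fin (n+2)) else 0) := by
    intro m hm
    by_cases h : m < n+1
    · rw [extv_cast n _ m h, if_pos h, psiL_apply]
    · rw [if_neg h]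
      apply extv_last
      rw [Fin.val_cast_of_lt hm]
      omega
  have hcast : ((i:ℕ) : Fin (n+2)) = i := Fin.cast_val_eq_self i
  rcases Nat.eq_zero_or_pos (i:ℕ) with h0 | hpos
  · have hi0 : i = 0 := Fin.ext (by simp [h0])
    subst hi0
    have := hsum 0 (by omega)
    simp only [Nat.cast_zero] at this
    rw [this]
    have hneg : extv n (psiL n x) (0 - 1) = 0 := extv_last n _ _ (neg_one_val n)
    rw [hneg]
    simp
  · rcases Nat.lt_or_ge (i:ℕ) (n+1) with hlt | hge
    · -- 1 ≤ i ≤ n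
      obtain ⟨m, hm⟩ : ∃ m, (i:ℕ) = m + 1 := ⟨(i:ℕ)-1, by omega⟩
      have e1 : extv n (psiL n x) i = ∑ k ∈ Finset.range ((i:ℕ)+1), x (k : Fin (n+2)) := by
        conv_lhs => rw [← hcast]
        rw [hsum (i:ℕ) i.isLt, if_pos hlt]
      have e2 : extv n (psiL n x) (i - 1) = ∑ k ∈ Finset.range ((i:ℕ)), x (k : Fin (n+2)) := by
        have : i - 1 = ((m : ℕ) : Fin (n+2)) := by
          rw [← hcast, hm]
          rw [cast_succ_sub_one]
        rw [this, hsum m (by omega), if_pos (by omega), hm]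
      rw [e1, e2, Finset.sum_range_succ, hcast]
      ring
    · -- i = n+1
      have hival : (i:ℕ) = n+1 := by have := i.isLt; omega
      have e1 : extv n (psiL n x) i = 0 := extv_last n _ _ hival
      have e2 : extv n (psiL n x) (i - 1) = ∑ k ∈ Finset.range (n+1), x (k : Fin (n+2)) := by
        have : i - 1 = ((n : ℕ) : Fin (n+2)) := by
          rw [← hcast, hival]
          exact cast_succ_sub_one n n
        rw [this, hsum n (by omega), if_pos (by omega)]
      rw [e1, e2]
      have htot : ∑ k ∈ Finset.range (n+2), x (k : Fin (n+2)) = 0 := by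
        rw [← hx]
        rw [← Fin.sum_univ_eq_sum_range (fun k => x (k : Fin (n+2))) (n+2)]
        exact Finset.sum_congr rfl (fun k _ => by rw [Fin.cast_val_eq_self])
      rw [Finset.sum_range_succ] at htot
      have : x (((n+1 : ℕ)) : Fin (n+2)) = x i := by
        congr 1
        rw [← hcast, hival]
      rw [this] at htot
      linarith


lemma extv_single (j : Fin (n+1)) (m : ℕ) (hm : m < n+2) :
    extv n (Pi.single j (1:ℝ)) ((m:ℕ) : Fin (n+2)) = if m = (j:ℕ) then 1 else 0 := by
  by_cases h : m < n+1
  · rw [extv_cast n _ m h, Pi.single_apply]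
    congr 1
    simp [Fin.ext_iff, eq_comm]
  · rw [extv_last n _ _ (by rw [Fin.val_cast_of_lt hm]; omega), if_neg (by have := j.isLt; omega)]

lemma phiL_single_cast (j : Fin (n+1)) (m : ℕ) (hm : m < n+2) :
    phiL n (Pi.single j (1:ℝ)) ((m:ℕ) : Fin (n+2)) =
      (if m = (j:ℕ) then 1 else 0) - (if m = (j:ℕ)+1 then 1 else 0) := by
  rw [phiL_apply]
  rcases Nat.eq_zero_or_pos m with h0 | hpos
  · subst h0
    rw [extv_single n j 0 hm]
    simp only [Nat.cast_zero]
    rw [extv_last n _ _ (neg_one_val n)]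
    norm_num
  · obtain ⟨p, rfl⟩ : ∃ p, m = p + 1 := ⟨m-1, by omega⟩
    rw [cast_succ_sub_one, extv_single n j (p+1) hm, extv_single n j p (by omega)]
    congr 1
    by_cases h : p = (j:ℕ)
    · rw [if_pos h, if_pos (by omega)]
    · rw [if_neg h, if_neg (by omega)]

end glue

noncomputable def Mmat (m : ℕ) : Matrix (Fin m) (Fin m) ℝ := fun i j =>
  (if (i:ℕ)+1 = j then 1 else 0) - (if (i:ℕ) = (j:ℕ) then 1 else 0) - (if (j:ℕ) = 0 then 1 else 0)

noncomputable def Umat (m : ℕ) : Matrix (Fin m) (Fin m) ℝ := fun i j =>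
  if (j:ℕ) = 0 then ((i:ℕ)+1 : ℝ) else if (i:ℕ) = (j:ℕ) then 1 else 0

noncomputable def Pmat (m : ℕ) : Matrix (Fin (m+1)) (Fin (m+1)) ℝ := fun i j =>
  if (j:ℕ) = 0 then (if (i:ℕ) = m then -((m:ℝ)+2) else 0)
  else (if (i:ℕ)+1 = j then 1 else 0) - (if (i:ℕ) = (j:ℕ) then 1 else 0)

lemma det_Umat (m : ℕ) : (Umat (m+1)).det = 1 := by
  rw [Matrix.det_of_lowerTriangular]
  · refine Finset.prod_eq_one fun i _ => ?_
    simp only [Umat]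
    rcases Nat.eq_zero_or_pos (i:ℕ) with h | h
    · simp [h]
    · simp [Nat.pos_iff_ne_zero.mp h]
  · intro i j hij
    simp only [Umat]
    have hij' : i < j := hij
    rw [if_neg (by omega : ¬ (j:ℕ) = 0), if_neg (by omega : ¬ (i:ℕ) = (j:ℕ))]

lemma mul_eq_Pmat (m : ℕ) : Mmat (m+1) * Umat (m+1) = Pmat m := by
  ext i j
  rw [Matrix.mul_apply]
  rcases Nat.eq_zero_or_pos (j:ℕ) with hj | hj
  · simp only [Umat, Pmat, Mmat, hj, eq_self_iff_true, if_true]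
    have : ∀ k : Fin (m+1),
        ((if (i:ℕ)+1 = k then (1:ℝ) else 0) - (if (i:ℕ) = (k:ℕ) then 1 else 0) -
          (if (k:ℕ) = 0 then 1 else 0)) * ((k:ℕ)+1 : ℝ)
        = (if (i:ℕ)+1 = (k:ℕ) then ((k:ℕ)+1:ℝ) else 0)
          - (if (i:ℕ) = (k:ℕ) then ((k:ℕ)+1:ℝ) else 0)
          - (if (k:ℕ) = 0 then ((k:ℕ)+1:ℝ) else 0) := by
      intro k
      split_ifs <;> ring
    rw [Finset.sum_congr rfl (fun k _ => this k)]
    rw [Finset.sum_sub_distrib, Finset.sum_sub_distrib]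
    have e1 : ∑ k : Fin (m+1), (if (i:ℕ)+1 = (k:ℕ) then ((k:ℕ)+1:ℝ) else 0)
        = if (i:ℕ)+1 < m+1 then ((i:ℕ)+2:ℝ) else 0 := by
      rw [Fin.sum_univ_eq_sum_range (fun k => if (i:ℕ)+1 = k then ((k:ℕ)+1:ℝ) else 0)]
      rw [Finset.sum_ite_eq (Finset.range (m+1)) ((i:ℕ)+1) (fun k => ((k:ℕ)+1:ℝ))]
      simp only [Finset.mem_range]
      split_ifs <;> push_cast <;> ring
    have e2 : ∑ k : Fin (m+1), (if (i:ℕ) = (k:ℕ) then ((k:ℕ)+1:ℝ) else 0)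
        = ((i:ℕ)+1:ℝ) := by
      rw [Fin.sum_univ_eq_sum_range (fun k => if (i:ℕ) = k then ((k:ℕ)+1:ℝ) else 0)]
      rw [Finset.sum_ite_eq (Finset.range (m+1)) ((i:ℕ)) (fun k => ((k:ℕ)+1:ℝ))]
      simp [i.isLt]
    have e3 : ∑ k : Fin (m+1), (if (k:ℕ) = 0 then ((k:ℕ)+1:ℝ) else 0) = 1 := by
      rw [Fin.sum_univ_eq_sum_range (fun k => if k = 0 then ((k:ℕ)+1:ℝ) else 0)]
      rw [Finset.sum_ite_eq' (Finset.range (m+1)) 0 (fun k => ((k:ℕ)+1:ℝ))]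
      simp
    rw [e1, e2, e3]
    have hi := i.isLt
    rcases Nat.lt_or_ge (i:ℕ) m with h | h
    · rw [if_pos (by omega), if_neg (by omega)]; push_cast; ring
    · have : (i:ℕ) = m := by omega
      rw [if_neg (by omega), if_pos this, this]; push_cast; ring
  · have hj' : (j:ℕ) ≠ 0 := Nat.pos_iff_ne_zero.mp hj
    simp only [Umat, Pmat, Mmat, hj', if_false, ite_false]
    have : ∀ k : Fin (m+1),
        ((if (i:ℕ)+1 = k then (1:ℝ) else 0) - (if (i:ℕ) = (k:ℕ) then 1 else 0) -
          (if (k:ℕ) = 0 then 1 else 0)) * (if (k:ℕ) = (j:ℕ) then (1:ℝ) else 0)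
        = if (k:ℕ) = (j:ℕ) then ((if (i:ℕ)+1 = k then (1:ℝ) else 0) - (if (i:ℕ) = (k:ℕ) then 1 else 0) -
          (if (k:ℕ) = 0 then 1 else 0)) else 0 := by
      intro k; split_ifs <;> ring
    rw [Finset.sum_congr rfl (fun k _ => this k)]
    have : ∀ k : Fin (m+1), ((k:ℕ) = (j:ℕ)) = (k = j) := by
      intro k; simp [Fin.ext_iff]
    simp only [this]
    rw [Finset.sum_ite_eq' Finset.univ j]
    simp [hj', Fin.ext_iff]

lemma det_Pmat (m : ℕ) : (Pmat m).det = (-1)^(m+1) * ((m:ℝ)+2) := by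
  have hQ : ((Pmat m).submatrix id (finRotate (m+1))).det
      = ∏ i : Fin (m+1), (Pmat m).submatrix id (finRotate (m+1)) i i := by
    apply Matrix.det_of_lowerTriangular
    intro i j hij
    have hij' : i < j := hij
    simp only [Matrix.submatrix_apply, id_eq, Pmat, finRotate_succ_apply]
    have hj := j.isLt
    rcases Nat.lt_or_ge (j:ℕ) m with h | h
    · have hv : ((j + 1 : Fin (m+1)) : ℕ) = (j:ℕ)+1 :=
        Fin.val_add_one_of_lt (by rw [Fin.lt_def]; simp; omega)
      rw [hv, if_neg (by omega), if_neg (by omega), if_neg (by omega)]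
      ring
    · have hjm : (j:ℕ) = m := by omega
      have hv : ((j + 1 : Fin (m+1)) : ℕ) = 0 := by
        have : j = Fin.last m := by
          apply Fin.ext; simpa using hjm
        rw [this]
        simp
      rw [if_pos hv, if_neg (by have := i.isLt; have : (i:ℕ) < (j:ℕ) := hij'; omega)]
  have hprod : ∏ i : Fin (m+1), (Pmat m).submatrix id (finRotate (m+1)) i i
      = -((m:ℝ)+2) := by
    rw [Fin.prod_univ_castSucc]
    have h1 : ∀ i : Fin m, (Pmat m).submatrix id (finRotate (m+1)) i.castSucc i.castSucc = 1 := by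
      intro i
      simp only [Matrix.submatrix_apply, id_eq, Pmat, finRotate_succ_apply]
      have hi := i.isLt
      have hv : ((i.castSucc + 1 : Fin (m+1)) : ℕ) = (i:ℕ)+1 :=
        Fin.val_add_one_of_lt (Fin.castSucc_lt_last i)
      simp only [Fin.coe_castSucc] at hv ⊢
      rw [hv, if_neg (by omega), if_pos rfl, if_neg (by omega)]
      ring
    rw [Finset.prod_congr rfl (fun i _ => h1 i), Finset.prod_const_one, one_mul]
    simp only [Matrix.submatrix_apply, id_eq, Pmat, finRotate_succ_apply]
    have hv : ((Fin.last m + 1 : Fin (m+1)) : ℕ) = 0 := by simp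
    rw [if_pos hv, if_pos (by simp)]
  rw [Matrix.det_permute' (finRotate (m+1)) (Pmat m)] at hQ
  rw [hprod] at hQ
  have hsign : (Equiv.Perm.sign (finRotate (m+1)) : ℝ) = (-1)^m := by
    rw [sign_finRotate]
    push_cast
    ring
  have : ((Equiv.Perm.sign (finRotate (m+1)) : ℤ) : ℝ) * (Pmat m).det = -((m:ℝ)+2) := by
    exact_mod_cast hQ
  rw [hsign] at this
  have hinv : (-1:ℝ)^m * ((-1:ℝ)^m) = 1 := by
    rw [← pow_add, ← two_mul, pow_mul]
    norm_num
  calc (Pmat m).det = ((-1:ℝ)^m * ((-1:ℝ)^m)) * (Pmat m).det := by rw [hinv, one_mul]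
    _ = (-1:ℝ)^m * ((-1:ℝ)^m * (Pmat m).det) := by ring
    _ = (-1:ℝ)^m * (-((m:ℝ)+2)) := by rw [this]
    _ = (-1)^(m+1) * ((m:ℝ)+2) := by rw [pow_succ]; ring

lemma det_Mmat (m : ℕ) : (Mmat (m+1)).det = (-1)^(m+1) * ((m:ℝ)+2) := by
  have := congrArg Matrix.det (mul_eq_Pmat m)
  rw [Matrix.det_mul, det_Umat, mul_one, det_Pmat] at this
  exact this

theorem stmt_7 (l : ℕ) (hl : 2 ≤ l) (σ : Equiv.Perm (Fin l))
    (hσ : σ.cycleType = {l})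
    (V : Submodule ℝ (Fin l → ℝ))
    (hV : V = LinearMap.ker (∑ i : Fin l, LinearMap.proj (R := ℝ) (φ := fun _ : Fin l => ℝ) i))
    (T S : (Fin l → ℝ) →ₗ[ℝ] (Fin l → ℝ))
    (hT : T = LinearMap.funLeft ℝ ℝ ⇑σ)
    (hS : S = T - LinearMap.id)
    (hinv : ∀ x ∈ V, S x ∈ V) :
    |LinearMap.det (S.restrict hinv)| = (l : ℝ) := by
  obtain ⟨n, rfl⟩ : ∃ n, l = n + 2 := ⟨l - 2, by omega⟩
  subst hS hT hV
  -- sum-of-projections applied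
  have hsumproj : ∀ z : Fin (n+2) → ℝ,
      (∑ i : Fin (n+2), LinearMap.proj (R := ℝ) (φ := fun _ : Fin (n+2) => ℝ) i) z
        = ∑ i : Fin (n+2), z i := by
    intro z
    simp [LinearMap.sum_apply]
  have hmemV : ∀ z : Fin (n+2) → ℝ, (∑ i : Fin (n+2), z i = 0) →
      z ∈ LinearMap.ker (∑ i : Fin (n+2), LinearMap.proj (R := ℝ)
        (φ := fun _ : Fin (n+2) => ℝ) i) := by
    intro z hz
    rw [LinearMap.mem_ker, hsumproj z, hz]
  -- conjugation
  have hconj : IsConj (finRotate (n+2)) σ := by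
    apply Equiv.Perm.isConj_of_cycleType_eq
    rw [cycleType_finRotate, hσ]
  rw [isConj_iff] at hconj
  obtain ⟨τ, hτ⟩ := hconj
  set VV := LinearMap.ker (∑ i : Fin (n+2), LinearMap.proj (R := ℝ)
      (φ := fun _ : Fin (n+2) => ℝ) i) with hVV
  -- sums are permutation invariant
  have hpermsum : ∀ (π : Equiv.Perm (Fin (n+2))) (z : Fin (n+2) → ℝ),
      ∑ i : Fin (n+2), z (π i) = ∑ i : Fin (n+2), z i := fun π z => Equiv.sum_comp π z
  have hmem : ∀ y : Fin (n+1) → ℝ,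
      LinearMap.funLeft ℝ ℝ ⇑τ⁻¹ (phiL n y) ∈ VV := by
    intro y
    apply hmemV
    rw [show (∑ i : Fin (n+2), LinearMap.funLeft ℝ ℝ ⇑τ⁻¹ (phiL n y) i)
        = ∑ i : Fin (n+2), phiL n y (τ⁻¹ i) from rfl]
    rw [hpermsum τ⁻¹ (phiL n y), sum_phiL]
  set fmap : (Fin (n+1) → ℝ) →ₗ[ℝ] VV :=
    LinearMap.codRestrict VV (LinearMap.funLeft ℝ ℝ ⇑τ⁻¹ ∘ₗ phiL n) hmem with hfmap
  set gmap : VV →ₗ[ℝ] (Fin (n+1) → ℝ) :=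
    psiL n ∘ₗ LinearMap.funLeft ℝ ℝ ⇑τ ∘ₗ VV.subtype with hgmap
  have h2 : gmap ∘ₗ fmap = LinearMap.id := by
    apply LinearMap.ext
    intro y
    have : LinearMap.funLeft ℝ ℝ ⇑τ (LinearMap.funLeft ℝ ℝ ⇑τ⁻¹ (phiL n y)) = phiL n y := by
      funext a
      simp [LinearMap.funLeft_apply]
    simp only [LinearMap.comp_apply, hfmap, LinearMap.codRestrict_apply, hgmap,
      Submodule.subtype_apply]
    rw [this, psi_phi]
    rfl
  have h1 : fmap ∘ₗ gmap = LinearMap.id := by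
    apply LinearMap.ext
    intro v
    apply Subtype.ext
    simp only [LinearMap.comp_apply, hfmap, LinearMap.codRestrict_apply, hgmap,
      Submodule.subtype_apply, LinearMap.id_apply]
    have hv : ∑ i : Fin (n+2), (v : Fin (n+2) → ℝ) i = 0 := by
      have hm' : (∑ i : Fin (n+2), LinearMap.proj (R := ℝ)
          (φ := fun _ : Fin (n+2) => ℝ) i) (v : Fin (n+2) → ℝ) = 0 := LinearMap.mem_ker.mp v.2
      have h' := hsumproj (v : Fin (n+2) → ℝ)
      rw [hm'] at h'
      exact h'.symm
    have hw : ∑ i : Fin (n+2), LinearMap.funLeft ℝ ℝ ⇑τ (v : Fin (n+2) → ℝ) i = 0 := by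
      rw [show (∑ i : Fin (n+2), LinearMap.funLeft ℝ ℝ ⇑τ (v : Fin (n+2) → ℝ) i)
          = ∑ i : Fin (n+2), (v : Fin (n+2) → ℝ) (τ i) from rfl, hpermsum τ _, hv]
    rw [phi_psi n _ hw]
    funext a
    simp [LinearMap.funLeft_apply]
  set Θ : (Fin (n+1) → ℝ) ≃ₗ[ℝ] VV := LinearEquiv.ofLinear fmap gmap h1 h2 with hΘ
  set S := LinearMap.funLeft ℝ ℝ ⇑σ - LinearMap.id with hSdef
  have hdet : LinearMap.det ((Θ.symm : VV →ₗ[ℝ] (Fin (n+1) → ℝ)) ∘ₗ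
      (S.restrict hinv) ∘ₗ (Θ : (Fin (n+1) → ℝ) →ₗ[ℝ] VV)) = LinearMap.det (S.restrict hinv) := by
    have := LinearMap.det_conj (S.restrict hinv) Θ.symm
    rwa [LinearEquiv.symm_symm] at this
  rw [← hdet]
  rw [← LinearMap.det_toMatrix (Pi.basisFun ℝ (Fin (n+1)))]
  have hmat : LinearMap.toMatrix (Pi.basisFun ℝ (Fin (n+1))) (Pi.basisFun ℝ (Fin (n+1)))
      ((Θ.symm : VV →ₗ[ℝ] (Fin (n+1) → ℝ)) ∘ₗ (S.restrict hinv) ∘ₗ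
        (Θ : (Fin (n+1) → ℝ) →ₗ[ℝ] VV)) = Mmat (n+1) := by
    ext i j
    rw [LinearMap.toMatrix_apply, Pi.basisFun_repr, Pi.basisFun_apply]
    set y : Fin (n+1) → ℝ := Pi.single j 1 with hyy
    have happ : ((Θ.symm : VV →ₗ[ℝ] (Fin (n+1) → ℝ)) ∘ₗ (S.restrict hinv) ∘ₗ
        (Θ : (Fin (n+1) → ℝ) →ₗ[ℝ] VV)) y
        = psiL n (LinearMap.funLeft ℝ ℝ ⇑τ (S (LinearMap.funLeft ℝ ℝ ⇑τ⁻¹ (phiL n y)))) := by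
      simp only [LinearMap.comp_apply, hΘ]
      rfl
    rw [happ]
    -- the conjugated map is the standard-cycle map
    have hkey : ∀ a : Fin (n+2),
        LinearMap.funLeft ℝ ℝ ⇑τ (S (LinearMap.funLeft ℝ ℝ ⇑τ⁻¹ (phiL n y))) a
          = phiL n y (a + 1) - phiL n y a := by
      intro a
      have hc : τ⁻¹ (σ (τ a)) = finRotate (n+2) a := by
        rw [← hτ]
        simp
      have e : LinearMap.funLeft ℝ ℝ ⇑τ (S (LinearMap.funLeft ℝ ℝ ⇑τ⁻¹ (phiL n y))) a
          = phiL n y (τ⁻¹ (σ (τ a))) - phiL n y (τ⁻¹ (τ a)) := rfl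
      rw [e, hc, finRotate_succ_apply, ← Equiv.Perm.mul_apply, inv_mul_cancel, Equiv.Perm.one_apply]
    rw [psiL_apply]
    set F : ℕ → ℝ := fun m => phiL n y ((m : ℕ) : Fin (n+2)) with hF
    have hterm : ∀ k : ℕ,
        LinearMap.funLeft ℝ ℝ ⇑τ (S (LinearMap.funLeft ℝ ℝ ⇑τ⁻¹ (phiL n y))) (k : Fin (n+2))
          = F (k+1) - F k := by
      intro k
      rw [hkey, hF]
      simp only
      congr 2
      push_cast
      ring
    rw [Finset.sum_congr rfl (fun k _ => hterm k), Finset.sum_range_sub F]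
    rw [hF]
    simp only
    rw [phiL_single_cast n j ((i:ℕ)+1) (by have := i.isLt; omega),
      phiL_single_cast n j 0 (by omega)]
    simp only [Mmat]
    rw [if_congr (show ((i:ℕ)+1 = (j:ℕ)+1) ↔ ((i:ℕ) = (j:ℕ)) by omega) rfl rfl]
    by_cases h1' : (i:ℕ)+1 = (j:ℕ) <;> by_cases h2' : (i:ℕ) = (j:ℕ) <;>
      by_cases h3' : (j:ℕ) = 0 <;>
      simp [h1', h2', h3'] <;> omega
  rw [hmat]
  rw [det_Mmat n]
  rw [abs_mul, abs_pow, abs_neg, abs_one, one_pow, one_mul]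
  rw [abs_of_nonneg (by positivity)]
  push_cast
  ring
end
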